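/- Let κ be a regular uncountable cardinal with κ^{<κ} = κ. If G ≤ S(κ) is a κ-maximal cofinitary group, then the action of G on κ has fewer than κ many orbits. -/

import Mathlib

open Cardinal

universe u

/-- A subgroup of `Equiv.Perm α` is `κ`-cofinitary (where `κ = #α`) if each of its
non-identity elements has fewer than `κ` many fixed points. -/
def IsKappaCofinitary {α : Type u} (G : Subgroup (Equiv.Perm α)) : Prop :=
  ∀ g ∈ G, g ≠ 1 → #{x : α | g x = x} < #α

namespace KappaMCG

variable {α : Type u}

/-- Evaluation of the word `g n * σ * g (n-1) * σ * ⋯ * σ * g 0`. -/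
def evalW (σ : Equiv.Perm α) (g : ℕ → Equiv.Perm α) : ℕ → Equiv.Perm α
  | 0 => g 0
  | n+1 => g (n+1) * σ * evalW σ g n

@[simp] lemma evalW_zero (σ : Equiv.Perm α) (g : ℕ → Equiv.Perm α) : evalW σ g 0 = g 0 := rfl

@[simp] lemma evalW_succ (σ : Equiv.Perm α) (g : ℕ → Equiv.Perm α) (n : ℕ) :
    evalW σ g (n+1) = g (n+1) * σ * evalW σ g n := rfl

lemma evalW_succ_apply (σ : Equiv.Perm α) (g : ℕ → Equiv.Perm α) (n : ℕ) (x : α) :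
    evalW σ g (n+1) x = g (n+1) (σ (evalW σ g n x)) := by
  simp [Equiv.Perm.mul_apply]

lemma evalW_congr (σ : Equiv.Perm α) {g h : ℕ → Equiv.Perm α} :
    ∀ n, (∀ i, i ≤ n → g i = h i) → evalW σ g n = evalW σ h n
  | 0, H => by simp [H 0 (le_refl 0)]
  | n+1, H => by
      simp only [evalW_succ, H (n+1) le_rfl, evalW_congr σ n (fun i hi => H i (hi.trans n.le_succ))]

/-- bottom peel : `w = (upper word) * σ * g 0` -/
lemma evalW_bot (σ : Equiv.Perm α) (g : ℕ → Equiv.Perm α) :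
    ∀ n, evalW σ g (n+1) = evalW σ (fun i => g (i+1)) n * σ * g 0
  | 0 => rfl
  | n+1 => by
      rw [show evalW σ g (n+1+1) = g (n+2) * σ * evalW σ g (n+1) from rfl, evalW_bot σ g n]
      simp only [evalW_succ]
      group

/-- absorbing an element into the top letter -/
lemma evalW_topmod (σ : Equiv.Perm α) (g : ℕ → Equiv.Perm α) (a : Equiv.Perm α) (n : ℕ) :
    a * evalW σ g n = evalW σ (fun i => if i = n then a * g n else g i) n := by
  cases n with
  | zero => simp
  | succ m =>
      have h2 : evalW σ (fun i => if i = m+1 then a * g (m+1) else g i) m = evalW σ g m :=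
        evalW_congr σ m (fun i hi => by simp [Nat.ne_of_lt (Nat.lt_succ_of_le hi)])
      show a * (g (m+1) * σ * evalW σ g m)
          = (if m+1 = m+1 then a * g (m+1) else g (m+1)) * σ *
            evalW σ (fun i => if i = m+1 then a * g (m+1) else g i) m
      rw [h2, if_pos rfl]; simp [mul_assoc]

/-- absorbing an element into the bottom letter -/
lemma evalW_botmod (σ : Equiv.Perm α) (g : ℕ → Equiv.Perm α) (a : Equiv.Perm α) :
    ∀ n, evalW σ g n * a = evalW σ (fun i => if i = 0 then g 0 * a else g i) n
  | 0 => by simp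
  | n+1 => by
      show g (n+1) * σ * evalW σ g n * a
          = (if n+1 = 0 then g 0 * a else g (n+1)) * σ * evalW σ (fun i => if i = 0 then g 0 * a else g i) n
      rw [if_neg (Nat.succ_ne_zero n), ← evalW_botmod σ g a n, mul_assoc, mul_assoc]

/-- the junction lemma : product of two words is a word (before cancellation) -/
lemma evalW_mul (σ : Equiv.Perm α) (g h : ℕ → Equiv.Perm α) (m : ℕ) :
    ∀ n, evalW σ g n * evalW σ h m =
      evalW σ (fun i => if i < m then h i else if i = m then g 0 * h m else g (i - m)) (m + n)
  | 0 => by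
      cases m with
      | zero => simp
      | succ m' =>
          set k : ℕ → Equiv.Perm α := fun i => if i < m'+1 then h i else if i = m'+1 then g 0 * h (m'+1)
                else g (i - (m'+1)) with hkdef
          have hk1 : k (m'+1) = g 0 * h (m'+1) := by
            rw [hkdef]; simp
          have hk2 : evalW σ k m' = evalW σ h m' :=
            evalW_congr σ m' (fun i hi => by rw [hkdef]; simp [Nat.lt_succ_of_le hi])
          show evalW σ g 0 * evalW σ h (m'+1) = evalW σ k (m'+1+0)
          rw [Nat.add_zero]
          show g 0 * (h (m'+1) * σ * evalW σ h m') = k (m'+1) * σ * evalW σ k m'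
          rw [hk1, hk2]; simp [mul_assoc]
  | n+1 => by
      have : m + (n+1) = (m+n)+1 := rfl
      rw [this]
      simp only [evalW_succ]
      rw [← evalW_mul σ g h m n]
      have h1 : ¬ (m + n + 1 < m) := by omega
      have h2 : ¬ (m + n + 1 = m) := by omega
      have h3 : m + n + 1 - m = n + 1 := by omega
      rw [if_neg h1, if_neg h2, h3]
      group


/-- the inverse of a word is a word -/
lemma evalW_inv (σ : Equiv.Perm α) (hσ : σ * σ = 1) (g : ℕ → Equiv.Perm α) :
    ∀ n, (evalW σ g n)⁻¹ = evalW σ (fun i => (g (n - i))⁻¹) n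
  | 0 => by simp
  | n+1 => by
      have hσ' : σ⁻¹ = σ := inv_eq_of_mul_eq_one_right hσ
      have IH := evalW_inv σ hσ g n
      have hbot : evalW σ (fun i => (g (n+1-i))⁻¹) (n+1)
          = evalW σ (fun i => (g (n-i))⁻¹) n * σ * (g (n+1))⁻¹ := by
        rw [evalW_bot σ (fun i => (g (n+1-i))⁻¹) n]
        congr 2
        exact evalW_congr σ n (fun i hi =>
          show (g (n+1-(i+1)))⁻¹ = (g (n-i))⁻¹ by rw [Nat.succ_sub_succ])
      rw [hbot, ← IH]
      simp only [evalW_succ]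
      rw [mul_inv_rev, mul_inv_rev, hσ']
      simp [mul_assoc]

variable (G : Subgroup (Equiv.Perm α))

/-- The set of permutations expressible as a (reduced) word in `G` and `σ`. -/
def WordSet (σ : Equiv.Perm α) : Set (Equiv.Perm α) :=
  {h | h ∈ G ∨ ∃ (n : ℕ) (g : ℕ → Equiv.Perm α), 1 ≤ n ∧ (∀ i, g i ∈ G) ∧
    (∀ i, 0 < i → i < n → g i ≠ 1) ∧ h = evalW σ g n}

lemma wordset_mul_word_left (σ : Equiv.Perm α) {a w : Equiv.Perm α} (ha : a ∈ G)
    (hw : ∃ (n : ℕ) (g : ℕ → Equiv.Perm α), 1 ≤ n ∧ (∀ i, g i ∈ G) ∧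
      (∀ i, 0 < i → i < n → g i ≠ 1) ∧ w = evalW σ g n) :
    a * w ∈ WordSet G σ := by
  obtain ⟨n, g, hn, hgG, hgI, rfl⟩ := hw
  refine Or.inr ⟨n, fun i => if i = n then a * g n else g i, hn, ?_, ?_, evalW_topmod σ g a n⟩
  · intro i; by_cases hi : i = n <;> simp [hi, mul_mem ha (hgG n), hgG i]
  · intro i h0 hi
    show (if i = n then a * g n else g i) ≠ 1
    rw [if_neg (Nat.ne_of_lt hi)]; exact hgI i h0 hi

lemma wordset_mul_word_right (σ : Equiv.Perm α) {a w : Equiv.Perm α} (ha : a ∈ G)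
    (hw : ∃ (n : ℕ) (g : ℕ → Equiv.Perm α), 1 ≤ n ∧ (∀ i, g i ∈ G) ∧
      (∀ i, 0 < i → i < n → g i ≠ 1) ∧ w = evalW σ g n) :
    w * a ∈ WordSet G σ := by
  obtain ⟨n, g, hn, hgG, hgI, rfl⟩ := hw
  refine Or.inr ⟨n, fun i => if i = 0 then g 0 * a else g i, hn, ?_, ?_, evalW_botmod σ g a n⟩
  · intro i; by_cases hi : i = 0 <;> simp [hi, mul_mem (hgG 0) ha, hgG i]
  · intro i h0 hi
    show (if i = 0 then g 0 * a else g i) ≠ 1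
    rw [if_neg (Nat.ne_of_gt h0)]; exact hgI i h0 hi

lemma wordset_mul_word_word (σ : Equiv.Perm α) (hσ : σ * σ = 1) :
    ∀ (N n m : ℕ) (g h : ℕ → Equiv.Perm α), n + m ≤ N → 1 ≤ n → 1 ≤ m →
    (∀ i, g i ∈ G) → (∀ i, 0 < i → i < n → g i ≠ 1) →
    (∀ i, h i ∈ G) → (∀ i, 0 < i → i < m → h i ≠ 1) →
    evalW σ g n * evalW σ h m ∈ WordSet G σ := by
  intro N
  induction N with
  | zero => intro n m g h hNnm hn hm; omega
  | succ N IH =>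
      intro n m g h hNnm hn hm hgG hgI hhG hhI
      by_cases hj : g 0 * h m = 1
      · -- cancellation
        obtain ⟨n', rfl⟩ : ∃ n', n = n' + 1 := ⟨n - 1, by omega⟩
        obtain ⟨m', rfl⟩ : ∃ m', m = m' + 1 := ⟨m - 1, by omega⟩
        have key : evalW σ g (n'+1) * evalW σ h (m'+1)
            = evalW σ (fun i => g (i+1)) n' * evalW σ h m' := by
          rw [evalW_bot σ g n', evalW_succ σ h m']
          calc evalW σ (fun i => g (i+1)) n' * σ * g 0 * (h (m'+1) * σ * evalW σ h m')
              = evalW σ (fun i => g (i+1)) n' * σ * (g 0 * h (m'+1)) * σ * evalW σ h m' := by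
                simp [mul_assoc]
            _ = evalW σ (fun i => g (i+1)) n' * (σ * σ) * evalW σ h m' := by
                rw [hj]; simp [mul_assoc]
            _ = evalW σ (fun i => g (i+1)) n' * evalW σ h m' := by rw [hσ]; simp
        rw [key]
        have hg'G : ∀ i, (fun i => g (i+1)) i ∈ G := fun i => hgG (i+1)
        have hg'I : ∀ i, 0 < i → i < n' → (fun i => g (i+1)) i ≠ 1 :=
          fun i h0 hi => hgI (i+1) (by omega) (by omega)
        rcases Nat.eq_zero_or_pos n' with hn' | hn'
        · subst hn'
          rcases Nat.eq_zero_or_pos m' with hm' | hm'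
          · subst hm'
            exact Or.inl (mul_mem (hgG 1) (hhG 0))
          · exact wordset_mul_word_left G σ (hgG 1)
              ⟨m', h, hm', hhG, fun i h0 hi => hhI i h0 (by omega), rfl⟩
        · rcases Nat.eq_zero_or_pos m' with hm' | hm'
          · subst hm'
            exact wordset_mul_word_right G σ (hhG 0)
              ⟨n', _, hn', hg'G, hg'I, rfl⟩
          · exact IH n' m' _ h (by omega) hn' hm' hg'G hg'I hhG
              (fun i h0 hi => hhI i h0 (by omega))
      · -- no cancellation
        refine Or.inr ⟨m + n, _, by omega, ?_, ?_, evalW_mul σ g h m n⟩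
        · intro i
          by_cases h1 : i < m
          · simp [h1, hhG i]
          · by_cases h2 : i = m <;> simp [h1, h2, mul_mem (hgG 0) (hhG m), hgG (i - m)]
        · intro i h0 hi
          show (if i < m then h i else if i = m then g 0 * h m else g (i - m)) ≠ 1
          by_cases h1 : i < m
          · simp only [if_pos h1]; exact hhI i h0 h1
          · by_cases h2 : i = m
            · simpa [h1, h2] using hj
            · simp only [if_neg h1, if_neg h2]
              exact hgI (i - m) (by omega) (by omega)

/-- `WordSet` is a subgroup. -/
def WordSubgroup (σ : Equiv.Perm α) (hσ : σ * σ = 1) : Subgroup (Equiv.Perm α) where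
  carrier := WordSet G σ
  one_mem' := Or.inl (one_mem G)
  mul_mem' := by
    rintro a b (ha | ha) (hb | hb)
    · exact Or.inl (mul_mem ha hb)
    · exact wordset_mul_word_left G σ ha hb
    · exact wordset_mul_word_right G σ hb ha
    · obtain ⟨n, g, hn, hgG, hgI, rfl⟩ := ha
      obtain ⟨m, h, hm, hhG, hhI, rfl⟩ := hb
      exact wordset_mul_word_word G σ hσ (n+m) n m g h le_rfl hn hm hgG hgI hhG hhI
  inv_mem' := by
    rintro a (ha | ⟨n, g, hn, hgG, hgI, rfl⟩)
    · exact Or.inl (inv_mem ha)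
    · refine Or.inr ⟨n, fun i => (g (n - i))⁻¹, hn, fun i => inv_mem (hgG (n - i)), ?_,
        evalW_inv σ hσ g n⟩
      intro i h0 hi
      simpa using hgI (n - i) (by omega) (by omega)

@[simp] lemma mem_wordSubgroup {σ : Equiv.Perm α} {hσ : σ * σ = 1} {h : Equiv.Perm α} :
    h ∈ WordSubgroup G σ hσ ↔ h ∈ WordSet G σ := Iff.rfl

lemma sigma_mem_wordSet (σ : Equiv.Perm α) : σ ∈ WordSet G σ := by
  refine Or.inr ⟨1, fun _ => 1, le_rfl, fun _ => one_mem G, by omega, ?_⟩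
  simp [evalW]


lemma mk_finsetBiUnion_lt {c : Cardinal.{u}} (hc : ℵ₀ ≤ c) (hc0 : 0 < c) (f : ℕ → Set α) :
    ∀ n : ℕ, (∀ i, i < n → #(f i) < c) → #(⋃ i ∈ Finset.range n, f i) < c := by
  intro n
  induction n with
  | zero => intro _; simp only [Finset.range_zero]; simpa using hc0
  | succ n IHn =>
      intro h
      rw [Finset.range_add_one, Finset.set_biUnion_insert]
      exact lt_of_le_of_lt (mk_union_le _ _)
        (Cardinal.add_lt_of_lt hc (h n (Nat.lt_succ_self n))
          (IHn fun i hi => h i (hi.trans (Nat.lt_succ_self n))))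

lemma mk_preimage_equiv_le (e : Equiv.Perm α) (s : Set α) : #(⇑e ⁻¹' s) ≤ #s :=
  Cardinal.mk_le_of_injective (f := fun x : (⇑e ⁻¹' s) => (⟨e x.1, x.2⟩ : s))
    (fun u v huv => Subtype.ext (e.injective (congrArg Subtype.val huv)))

/-- The key combinatorial lemma: every genuine word in `G` and `σ` (with at least one
occurrence of `σ`) has fewer than `κ` fixed points, provided `σ` is a "fresh-orbit"
pairing. -/
lemma word_fix {I : Type v} [LinearOrder I] (G : Subgroup (Equiv.Perm α))
    (hunc : ℵ₀ < #α) (hcof : IsKappaCofinitary G)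
    (σ : Equiv.Perm α) (idx : α → I) (B : α → Prop)
    (hinv : ∀ x, σ (σ x) = x) (hfpf : ∀ x, σ x ≠ x) (hidx : ∀ x, idx (σ x) = idx x)
    (hB : ∀ x, B x ∨ B (σ x))
    (hfar : ∀ x y, B y → Quotient.mk (MulAction.orbitRel G α) x =
      Quotient.mk (MulAction.orbitRel G α) y → x ≠ y → idx y < idx x) :
    ∀ n, 1 ≤ n → ∀ g : ℕ → Equiv.Perm α, (∀ i, g i ∈ G) →
      (∀ i, 0 < i → i < n → g i ≠ 1) → #{x : α | evalW σ g n x = x} < #α := by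
  have hqG : ∀ p ∈ G, ∀ y : α, Quotient.mk (MulAction.orbitRel G α) (p y) =
      Quotient.mk (MulAction.orbitRel G α) y := fun p hp y => Quotient.sound ⟨⟨p, hp⟩, rfl⟩
  intro n
  induction n using Nat.strong_induction_on with
  | _ n IH =>
  intro hn g hgG hgI
  have claim : ∀ x, evalW σ g n x = x →
      (∃ i, 0 < i ∧ i < n ∧ g i (evalW σ g i x) = evalW σ g i x) ∨
      (2 ≤ n ∧ ∃ a, evalW σ (fun i => g (i+1)) (n-2) a = a ∧
        (x = (g 0)⁻¹ (σ a) ∨ x = g n (σ a))) := by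
    intro x hx
    set z : ℕ → α := fun i => evalW σ g i x with hz
    have hzsucc : ∀ i, z (i+1) = g (i+1) (σ (z i)) := fun i => evalW_succ_apply σ g i x
    have hzn : z n = x := hx
    obtain ⟨is, hismem, hismax⟩ := Finset.exists_max_image (Finset.range n)
      (fun i => idx (z i)) ⟨0, Finset.mem_range.mpr (by omega)⟩
    have hisn : is < n := Finset.mem_range.mp hismem
    have main : ∀ b : α, B b → idx b = idx (z is) → (b = z is ∨ b = σ (z is)) →
        (∃ i, 0 < i ∧ i < n ∧ g i (evalW σ g i x) = evalW σ g i x) ∨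
        (2 ≤ n ∧ ∃ a, evalW σ (fun i => g (i+1)) (n-2) a = a ∧
          (x = (g 0)⁻¹ (σ a) ∨ x = g n (σ a))) := by
      intro b hBb hbidx hbcase
      have hC : ∀ j, j < n → ∀ w, (w = z j ∨ w = σ (z j)) →
          Quotient.mk (MulAction.orbitRel G α) w = Quotient.mk (MulAction.orbitRel G α) b →
          w = b := by
        intro j hj w hw hqw
        by_contra hne
        have h1 : idx b < idx w := hfar w b hBb hqw hne
        have h2 : idx w = idx (z j) := by
          rcases hw with rfl | rfl
          · rfl
          · exact hidx (z j)
        have h3 : idx (z j) ≤ idx (z is) := hismax j (Finset.mem_range.mpr hj)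
        rw [h2] at h1
        have h4 := h1.trans_le h3
        rw [← hbidx] at h4
        exact lt_irrefl _ h4
      rcases hbcase with hbeq | hbeq
      · -- case A : b = z is
        rcases Nat.eq_zero_or_pos is with h0 | h0
        · -- boundary case
          rw [h0] at hbeq
          have hqxb : Quotient.mk (MulAction.orbitRel G α) x =
              Quotient.mk (MulAction.orbitRel G α) b := by
            rw [hbeq, show z 0 = g 0 x from rfl, hqG _ (hgG 0)]
          have h4 : z n = g n (σ (z (n-1))) := by
            have := hzsucc (n-1); rwa [show n-1+1 = n by omega] at this
          have h5 : σ (z (n-1)) = (g n)⁻¹ x := by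
            rw [hzn] at h4; rw [h4]; simp
          have hzn1 : σ (z (n-1)) = b := by
            refine hC (n-1) (by omega) _ (Or.inr rfl) ?_
            rw [h5, hqG _ (inv_mem (hgG n)), hqxb]
          rcases eq_or_lt_of_le hn with hn1 | hn2
          · exfalso
            rw [show n - 1 = 0 by omega] at hzn1
            rw [hbeq] at hzn1
            exact hfpf (z 0) hzn1
          · have hzn1' : z (n-1) = σ b := by rw [← hzn1, hinv]
            right
            refine ⟨by omega, σ b, ?_, Or.inl ?_⟩
            · have key : ∀ j, j ≤ n - 2 → evalW σ (fun i => g (i+1)) j (σ b) = z (j+1) := by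
                intro j
                induction j with
                | zero => intro _; show g 1 (σ b) = z 1; rw [hbeq, ← hzsucc 0]
                | succ j IHj =>
                    intro hj
                    rw [evalW_succ_apply, IHj (by omega), ← hzsucc (j+1)]
              rw [key (n-2) le_rfl, show n-2+1 = n-1 by omega, hzn1']
            · rw [hinv b, hbeq, show z 0 = g 0 x from rfl]; simp
        · -- interior case
          obtain ⟨j, rfl⟩ : ∃ j, is = j + 1 := ⟨is - 1, by omega⟩
          have h4 : σ (z j) = (g (j+1))⁻¹ b := by rw [hbeq, hzsucc j]; simp
          have h5 : σ (z j) = b := by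
            refine hC j (by omega) _ (Or.inr rfl) ?_
            rw [h4, hqG _ (inv_mem (hgG (j+1)))]
          have h6 : g (j+1) b = b := by
            conv_rhs => rw [hbeq, hzsucc j, h5]
          left
          refine ⟨j+1, by omega, hisn, ?_⟩
          show g (j+1) (z (j+1)) = z (j+1)
          rw [← hbeq]; exact h6
      · -- case B : b = σ (z is)
        have hzsb : z is = σ b := by rw [hbeq, hinv]
        by_cases hbnd : is = n - 1
        · -- boundary case
          have h4 : z n = g n (σ (z is)) := by
            have := hzsucc (n-1); rw [show n-1+1 = n by omega] at this; rwa [← hbnd] at this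
          have hxgb : x = g n b := by rw [← hzn, h4, ← hbeq]
          have hqxb : Quotient.mk (MulAction.orbitRel G α) x =
              Quotient.mk (MulAction.orbitRel G α) b := by rw [hxgb, hqG _ (hgG n)]
          have hz0 : z 0 = b := by
            refine hC 0 (by omega) _ (Or.inl rfl) ?_
            rw [show z 0 = g 0 x from rfl, hqG _ (hgG 0), hqxb]
          rcases eq_or_lt_of_le hn with hn1 | hn2
          · exfalso
            have : is = 0 := by omega
            rw [this] at hbeq
            rw [← hz0] at hbeq
            exact hfpf (z 0) hbeq.symm
          · right
            refine ⟨by omega, σ b, ?_, Or.inr ?_⟩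
            · have key : ∀ j, j ≤ n - 2 → evalW σ (fun i => g (i+1)) j (σ b) = z (j+1) := by
                intro j
                induction j with
                | zero => intro _; show g 1 (σ b) = z 1; rw [← hz0, ← hzsucc 0]
                | succ j IHj =>
                    intro hj
                    rw [evalW_succ_apply, IHj (by omega), ← hzsucc (j+1)]
              rw [key (n-2) le_rfl, show n-2+1 = n-1 by omega, ← hbnd, hzsb]
            · rw [hinv b]; exact hxgb
        · -- interior case
          have h4 : z (is+1) = g (is+1) b := by rw [hzsucc, hbeq]
          have h5 : z (is+1) = b := by
            refine hC (is+1) (by omega) _ (Or.inl rfl) ?_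
            rw [h4, hqG _ (hgG (is+1))]
          left
          refine ⟨is+1, by omega, by omega, ?_⟩
          show g (is+1) (z (is+1)) = z (is+1)
          rw [h5, ← h4, h5]
    rcases hB (z is) with hBb | hBb
    · exact main (z is) hBb rfl (Or.inl rfl)
    · exact main (σ (z is)) hBb (hidx (z is)) (Or.inr rfl)
  -- cardinality computation
  rcases eq_or_lt_of_le hn with hn1 | hn2
  · -- n = 1 : no fixed points at all
    have hempty : {x : α | evalW σ g n x = x} = ∅ := by
      ext x
      simp only [Set.mem_setOf_eq, Set.mem_empty_iff_false, iff_false]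
      intro hx
      rcases claim x hx with ⟨i, h0, hi, _⟩ | ⟨h2, _⟩
      · omega
      · omega
    rw [hempty]
    simpa using (aleph0_pos.trans hunc)
  · -- n ≥ 2
    have hF' : #{x : α | evalW σ (fun i => g (i+1)) (n-2) x = x} < #α := by
      rcases Nat.eq_zero_or_pos (n-2) with h2 | h2
      · rw [h2]
        exact hcof (g 1) (hgG 1) (hgI 1 (by omega) (by omega))
      · exact IH (n-2) (by omega) (by omega) _ (fun i => hgG (i+1))
          (fun i hi0 hi => hgI (i+1) (by omega) (by omega))
    have hsub : {x : α | evalW σ g n x = x} ⊆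
        (⋃ i ∈ Finset.range (n-1), (⇑(evalW σ g (i+1)) ⁻¹' {y | g (i+1) y = y}))
        ∪ ((fun a => (g 0)⁻¹ (σ a)) '' {x | evalW σ (fun i => g (i+1)) (n-2) x = x}
           ∪ (fun a => g n (σ a)) '' {x | evalW σ (fun i => g (i+1)) (n-2) x = x}) := by
      intro x hx
      rcases claim x hx with ⟨i, h0, hi, hfix⟩ | ⟨-, a, ha, hxa⟩
      · left
        refine Set.mem_biUnion (Finset.mem_range.mpr (show i-1 < n-1 by omega)) ?_
        have hii : i - 1 + 1 = i := by omega
        rw [Set.mem_preimage, hii]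
        exact hfix
      · right
        rcases hxa with h | h
        · exact Or.inl ⟨a, ha, h.symm⟩
        · exact Or.inr ⟨a, ha, h.symm⟩
    refine lt_of_le_of_lt (mk_le_mk_of_subset hsub) ?_
    refine lt_of_le_of_lt (mk_union_le _ _) (Cardinal.add_lt_of_lt hunc.le ?_ ?_)
    · refine mk_finsetBiUnion_lt hunc.le (aleph0_pos.trans hunc) _ (n-1) (fun i hi => ?_)
      exact lt_of_le_of_lt (mk_preimage_equiv_le _ _)
        (hcof (g (i+1)) (hgG (i+1)) (hgI (i+1) (by omega) (by omega)))
    · exact lt_of_le_of_lt (mk_union_le _ _) (Cardinal.add_lt_of_lt hunc.le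
        (lt_of_le_of_lt mk_image_le hF') (lt_of_le_of_lt mk_image_le hF'))


/-- Construction of the fresh-orbit pairing by transfinite recursion. -/
lemma exists_pairing (G : Subgroup (Equiv.Perm α)) [LinearOrder α]
    (hwf : WellFounded ((· < ·) : α → α → Prop))
    (hseg : ∀ ξ : α, #{y : α | y < ξ} < #α)
    (hunc : ℵ₀ < #α)
    (hQ : #(Quotient (MulAction.orbitRel G α)) = #α) :
    ∃ (σ : Equiv.Perm α) (idx : α → α) (B : α → Prop),
      (∀ x, σ (σ x) = x) ∧ (∀ x, σ x ≠ x) ∧ (∀ x, idx (σ x) = idx x) ∧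
      (∀ x, B x ∨ B (σ x)) ∧
      (∀ x y, B y → Quotient.mk (MulAction.orbitRel G α) x =
        Quotient.mk (MulAction.orbitRel G α) y → x ≠ y → idx y < idx x) := by
  classical
  obtain ⟨Pm, hfix⟩ : ∃ Pm : α → Option (α × α), ∀ ξ, Pm ξ =
      (if (∃ η, ∃ _ : η < ξ, ∃ p : α × α, Pm η = some p ∧ (ξ = p.1 ∨ ξ = p.2)) then none
       else if hb : (∃ b : α, ∀ u,
           ((∃ η, ∃ _ : η < ξ, ∃ p : α × α, Pm η = some p ∧ (u = p.1 ∨ u = p.2)) ∨ u = ξ) →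
           Quotient.mk (MulAction.orbitRel G α) u ≠ Quotient.mk (MulAction.orbitRel G α) b)
         then some (ξ, Classical.choose hb) else none) := by
    refine ⟨hwf.fix (fun ξ ih =>
      if (∃ η, ∃ h : η < ξ, ∃ p : α × α, ih η h = some p ∧ (ξ = p.1 ∨ ξ = p.2)) then none
      else if hb : (∃ b : α, ∀ u,
          ((∃ η, ∃ h : η < ξ, ∃ p : α × α, ih η h = some p ∧ (u = p.1 ∨ u = p.2)) ∨ u = ξ) →
          Quotient.mk (MulAction.orbitRel G α) u ≠ Quotient.mk (MulAction.orbitRel G α) b)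
        then some (ξ, Classical.choose hb) else none), fun ξ => ?_⟩
    rw [WellFounded.fix_eq]
  set U : α → Set α := fun ξ =>
    {u | ∃ η, ∃ _ : η < ξ, ∃ p : α × α, Pm η = some p ∧ (u = p.1 ∨ u = p.2)} with hU
  -- smallness of the used set
  have hUsmall : ∀ ξ : α, #(U ξ) < #α := by
    intro ξ
    have h1 : U ξ ⊆ Set.range (fun y : {y : α // y < ξ} =>
        ((Pm y.1).map Prod.fst).getD ξ) ∪ Set.range (fun y : {y : α // y < ξ} =>
        ((Pm y.1).map Prod.snd).getD ξ) := by
      rintro u ⟨η, hη, p, hp, hu | hu⟩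
      · left; exact ⟨⟨η, hη⟩, by simp [hp, hu.symm]⟩
      · right; exact ⟨⟨η, hη⟩, by simp [hp, hu.symm]⟩
    refine lt_of_le_of_lt (mk_le_mk_of_subset h1) ?_
    refine lt_of_le_of_lt (mk_union_le _ _) (Cardinal.add_lt_of_lt hunc.le ?_ ?_) <;>
      exact lt_of_le_of_lt mk_range_le (hseg ξ)
  -- a fresh orbit always exists
  have hExB : ∀ ξ : α, ∃ b : α, ∀ u, (u ∈ U ξ ∨ u = ξ) →
      Quotient.mk (MulAction.orbitRel G α) u ≠ Quotient.mk (MulAction.orbitRel G α) b := by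
    intro ξ
    set T : Set (Quotient (MulAction.orbitRel G α)) :=
      Quotient.mk (MulAction.orbitRel G α) '' (U ξ ∪ {ξ}) with hT
    have hTsmall : #T < #α := by
      refine lt_of_le_of_lt mk_image_le ?_
      refine lt_of_le_of_lt (mk_union_le _ _) (Cardinal.add_lt_of_lt hunc.le (hUsmall ξ) ?_)
      rw [mk_singleton]
      exact one_lt_aleph0.trans hunc
    have hex : ∃ c : Quotient (MulAction.orbitRel G α), c ∉ T := by
      by_contra hc
      push_neg at hc
      have : Set.univ ⊆ T := fun c _ => hc c
      have h2 : #(Quotient (MulAction.orbitRel G α)) ≤ #T := by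
        calc #(Quotient (MulAction.orbitRel G α))
            = #(Set.univ : Set (Quotient (MulAction.orbitRel G α))) := mk_univ.symm
          _ ≤ #T := mk_le_mk_of_subset this
      rw [hQ] at h2
      exact absurd (h2.trans_lt hTsmall) (lt_irrefl _)
    obtain ⟨c, hc⟩ := hex
    obtain ⟨b, hb⟩ := Quotient.exists_rep c
    refine ⟨b, fun u hu hqu => hc ?_⟩
    refine ⟨u, ?_, by rw [hqu, hb]⟩
    rcases hu with h | h
    · exact Or.inl h
    · exact Or.inr h
  -- characterization of the pairs
  have hsome : ∀ ξ p, Pm ξ = some p → p.1 = ξ ∧ (ξ ∉ U ξ) ∧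
      ∀ u, (u ∈ U ξ ∨ u = ξ) → Quotient.mk (MulAction.orbitRel G α) u ≠
        Quotient.mk (MulAction.orbitRel G α) p.2 := by
    intro ξ p hp
    rw [hfix ξ] at hp
    by_cases h1 : (∃ η, ∃ _ : η < ξ, ∃ p : α × α, Pm η = some p ∧ (ξ = p.1 ∨ ξ = p.2))
    · rw [if_pos h1] at hp
      exact absurd hp (by simp)
    · rw [if_neg h1] at hp
      by_cases h2 : (∃ b : α, ∀ u,
          ((∃ η, ∃ _ : η < ξ, ∃ p : α × α, Pm η = some p ∧ (u = p.1 ∨ u = p.2)) ∨ u = ξ) →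
          Quotient.mk (MulAction.orbitRel G α) u ≠ Quotient.mk (MulAction.orbitRel G α) b)
      · rw [dif_pos h2] at hp
        have hpe : (ξ, Classical.choose h2) = p := Option.some.inj hp
        have hspec := Classical.choose_spec h2
        refine ⟨?_, h1, ?_⟩
        · rw [← hpe]
        · intro u hu
          rw [← hpe]
          exact hspec u hu
      · rw [dif_neg h2] at hp
        exact absurd hp (by simp)
  have hcover : ∀ ξ, ξ ∉ U ξ → ∃ b, Pm ξ = some (ξ, b) := by
    intro ξ hξ
    have hξ' : ¬(∃ η, ∃ _ : η < ξ, ∃ p : α × α, Pm η = some p ∧ (ξ = p.1 ∨ ξ = p.2)) := hξ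
    have h2 : ∃ b : α, ∀ u,
        ((∃ η, ∃ _ : η < ξ, ∃ p : α × α, Pm η = some p ∧ (u = p.1 ∨ u = p.2)) ∨ u = ξ) →
        Quotient.mk (MulAction.orbitRel G α) u ≠ Quotient.mk (MulAction.orbitRel G α) b :=
      hExB ξ
    rw [hfix ξ, if_neg hξ', dif_pos h2]
    exact ⟨_, rfl⟩
  have hcov : ∀ x : α, ∃ ξ p, Pm ξ = some p ∧ (x = p.1 ∨ x = p.2) := by
    intro x
    by_cases hx : x ∈ U x
    · obtain ⟨η, hη, p, hp, hu⟩ := hx; exact ⟨η, p, hp, hu⟩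
    · obtain ⟨b, hb⟩ := hcover x hx; exact ⟨x, (x, b), hb, Or.inl rfl⟩
  have hdisj : ∀ ξ ξ' p p', Pm ξ = some p → Pm ξ' = some p' → ξ < ξ' →
      ∀ x, (x = p.1 ∨ x = p.2) → (x = p'.1 ∨ x = p'.2) → False := by
    intro ξ ξ' p p' hp hp' hlt x hx hx'
    have h1 := hsome ξ' p' hp'
    have hxU : x ∈ U ξ' := ⟨ξ, hlt, p, hp, hx⟩
    rcases hx' with h | h
    · rw [h, h1.1] at hxU; exact h1.2.1 hxU
    · exact h1.2.2 x (Or.inl hxU) (by rw [h])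
  have huniq : ∀ ξ ξ' p p', Pm ξ = some p → Pm ξ' = some p' →
      ∀ x, (x = p.1 ∨ x = p.2) → (x = p'.1 ∨ x = p'.2) → ξ = ξ' ∧ p = p' := by
    intro ξ ξ' p p' hp hp' x hx hx'
    rcases lt_trichotomy ξ ξ' with h | h | h
    · exact False.elim (hdisj ξ ξ' p p' hp hp' h x hx hx')
    · subst h
      rw [hp] at hp'
      exact ⟨rfl, Option.some.inj hp'⟩
    · exact False.elim (hdisj ξ' ξ p' p hp' hp h x hx' hx)
  choose stg pr hpr hmem using hcov
  have hsame : ∀ x y, (y = (pr x).1 ∨ y = (pr x).2) → stg y = stg x ∧ pr y = pr x :=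
    fun x y hy => huniq (stg y) (stg x) (pr y) (pr x) (hpr y) (hpr x) y (hmem y) hy
  have hq12 : ∀ x, (pr x).1 ≠ (pr x).2 := by
    intro x he
    have h := hsome (stg x) (pr x) (hpr x)
    exact h.2.2 (pr x).1 (Or.inr h.1) (by rw [he])
  set f : α → α := fun x => if x = (pr x).1 then (pr x).2 else (pr x).1 with hf
  have hfa : ∀ x, x = (pr x).1 → f x = (pr x).2 := by
    intro x h; rw [hf]; simp only [if_pos h]
  have hfb : ∀ x, x ≠ (pr x).1 → f x = (pr x).1 := by
    intro x h; rw [hf]; simp only [if_neg h]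
  have hfmem : ∀ x, f x = (pr x).1 ∨ f x = (pr x).2 := by
    intro x
    by_cases h : x = (pr x).1
    · exact Or.inr (hfa x h)
    · exact Or.inl (hfb x h)
  have hprf : ∀ x, pr (f x) = pr x ∧ stg (f x) = stg x := by
    intro x
    have := hsame x (f x) (hfmem x)
    exact ⟨this.2, this.1⟩
  have hinvol : ∀ x, f (f x) = x := by
    intro x
    rcases hmem x with h | h
    · have h2 : f x = (pr x).2 := hfa x h
      have h3 : f (f x) = (pr (f x)).1 := by
        refine hfb (f x) ?_
        rw [(hprf x).1, h2]
        exact fun hc => hq12 x hc.symm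
      rw [h3, (hprf x).1, ← h]
    · have hx1 : x ≠ (pr x).1 := by
        intro hc
        exact hq12 x (by rw [← hc, ← h])
      have h2 : f x = (pr x).1 := hfb x hx1
      have h3 : f (f x) = (pr (f x)).2 := by
        refine hfa (f x) ?_
        rw [(hprf x).1, h2]
      rw [h3, (hprf x).1, ← h]
  have hfne : ∀ x, f x ≠ x := by
    intro x hc
    rcases hmem x with h | h
    · have h2 : f x = (pr x).2 := hfa x h
      exact hq12 x (calc (pr x).1 = x := h.symm
        _ = f x := hc.symm
        _ = (pr x).2 := h2)
    · have hx1 : x ≠ (pr x).1 := by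
        intro hc2
        exact hq12 x (by rw [← hc2, ← h])
      refine hx1 ?_
      calc x = f x := hc.symm
        _ = (pr x).1 := hfb x hx1
  refine ⟨Function.Involutive.toPerm f hinvol, stg, fun x => x = (pr x).2, ?_, ?_, ?_, ?_, ?_⟩
  · intro x; exact hinvol x
  · intro x; exact hfne x
  · intro x; exact (hprf x).2
  · intro x
    simp only [Function.Involutive.coe_toPerm]
    rcases hmem x with h | h
    · right
      show f x = (pr (f x)).2
      rw [(hprf x).1]
      exact hfa x h
    · exact Or.inl h
  · intro x y hBy hq hne
    rcases lt_trichotomy (stg y) (stg x) with h | h | h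
    · exact h
    · exfalso
      have hpp : pr y = pr x := by
        have h1 := hpr y
        rw [h, hpr x] at h1
        exact (Option.some.inj h1).symm
      have hs := hsome (stg x) (pr x) (hpr x)
      rcases hmem x with hx | hx
      · refine hs.2.2 x (Or.inr (hx.trans hs.1)) ?_
        exact hq.trans (congrArg _ (hBy.trans (congrArg Prod.snd hpp)))
      · exact hne (by rw [hx, ← hpp, ← hBy])
    · exfalso
      have hs := hsome (stg y) (pr y) (hpr y)
      have hxU : x ∈ U (stg y) := ⟨stg x, h, pr x, hpr x, hmem x⟩
      exact hs.2.2 x (Or.inl hxU) (hq.trans (congrArg _ hBy))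

end KappaMCG


/-- A `κ`-maximal cofinitary group has fewer than `κ` many orbits. -/
theorem kappa_maximal_cofinitary_group_lt_kappa_orbits
    {α : Type u}
    (hreg : (#α).IsRegular) (hunc : ℵ₀ < #α)
    (hpow : #α ^< #α = #α)
    (G : Subgroup (Equiv.Perm α))
    (hcof : IsKappaCofinitary G)
    (hmax : ∀ H : Subgroup (Equiv.Perm α), G ≤ H → IsKappaCofinitary H → H = G) :
    #(Quotient (MulAction.orbitRel G α)) < #α := by
  classical
  by_contra hcon
  have hQ : #(Quotient (MulAction.orbitRel G α)) = #α :=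
    le_antisymm Cardinal.mk_quotient_le (not_lt.mp hcon)
  obtain ⟨r, wo, hord⟩ := Cardinal.ord_eq α
  haveI := wo
  letI : LinearOrder α := linearOrderOfSTO r
  have hwf : WellFounded ((· < ·) : α → α → Prop) := wo.wf
  have hseg : ∀ ξ : α, #{y : α | y < ξ} < #α := by
    intro ξ
    have h1 := Ordinal.typein_lt_type r ξ
    rw [← hord] at h1
    have h2 := Cardinal.lt_ord.mp h1
    change #{y // r y ξ} < #α at h2
    exact h2
  obtain ⟨σ, idx, B, hinv, hfpf, hidx, hB, hfar⟩ :=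
    KappaMCG.exists_pairing G hwf hseg hunc hQ
  have hσ2 : σ * σ = 1 := Equiv.ext fun x => hinv x
  set H := Subgroup.closure ((G : Set (Equiv.Perm α)) ∪ {σ}) with hH
  have hGH : G ≤ H := fun g hg => Subgroup.subset_closure (Or.inl hg)
  have hle : H ≤ KappaMCG.WordSubgroup G σ hσ2 := by
    rw [hH]
    refine (Subgroup.closure_le _).mpr ?_
    rintro x (hx | hx)
    · exact Or.inl hx
    · rw [Set.mem_singleton_iff] at hx
      subst hx
      exact KappaMCG.sigma_mem_wordSet G x
  have hHcof : IsKappaCofinitary H := by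
    intro h hh hne
    rcases hle hh with hG | ⟨n, g, hn, hgG, hgI, rfl⟩
    · exact hcof h hG hne
    · exact KappaMCG.word_fix G hunc hcof σ idx B hinv hfpf hidx hB hfar n hn g hgG hgI
  have hHG := hmax H hGH hHcof
  have hσH : σ ∈ H := Subgroup.subset_closure (Or.inr rfl)
  rw [hHG] at hσH
  have hqσ : ∀ y : α, Quotient.mk (MulAction.orbitRel G α) (σ y) =
      Quotient.mk (MulAction.orbitRel G α) y :=
    fun y => Quotient.sound ⟨⟨σ, hσH⟩, rfl⟩
  have hne : Nonempty α := Cardinal.mk_ne_zero_iff.mp (aleph0_pos.trans hunc).ne'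
  obtain ⟨x0⟩ := hne
  rcases hB x0 with hb | hb
  · have h1 := hfar (σ x0) x0 hb (hqσ x0) (hfpf x0)
    rw [hidx x0] at h1
    exact lt_irrefl _ h1
  · have h1 := hfar (σ (σ x0)) (σ x0) hb (hqσ (σ x0)) (hfpf (σ x0))
    rw [hidx (σ x0)] at h1
    exact lt_irrefl _ h1
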